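/- Assume K < α(T_n) + κ. Then lim_{t ↑ T_n} (−G²_n(t)/G¹_n(t)) = (θκ − α(T_n) + K)/(α(T_n) + κ − K), and moreover −H²_n(T_n)/H¹_n(T_n) equals the same value, where H¹_n(t) := −(κ + α(t)) exp(−∫₀ᵗ α(s) ds) + c_n K e^{−κ(T_n−t)} and H²_n(t) := −θ H¹_n(t) + (1 + θ)(c_n K − α(t) exp(−∫₀ᵗ α(s) ds)). In other words, the zero curves g of G and h of H have the same left limit at T_n. -/

import Mathlib

open intervalIntegral Real Filter

/-- `exp(-∫₀ᵗ α(s) ds)`. -/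
noncomputable def ed (α : ℝ → ℝ) (t : ℝ) : ℝ := Real.exp (-∫ s in (0:ℝ)..t, α s)

/-- `c_i = exp(-∫₀^{T_i} α(s) ds)`. -/
noncomputable def c (α : ℝ → ℝ) (T : ℕ → ℝ) (i : ℕ) : ℝ := ed α (T i)

/-- `G¹_m(t) = exp(-∫₀ᵗ α) - c_n e^{-κ(T_n-t)} - c_m (T_m-t) K e^{-κ(T_m-t)}
  - ΔK ∑_{j=m+1}^n c_j e^{-κ(T_j-t)}`. -/
noncomputable def G1 (α : ℝ → ℝ) (T : ℕ → ℝ) (n : ℕ) (κ Δ K : ℝ) (m : ℕ) (t : ℝ) : ℝ :=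
  ed α t - c α T n * Real.exp (-κ * (T n - t))
    - c α T m * ((T m - t) * K) * Real.exp (-κ * (T m - t))
    - Δ * K * ∑ j ∈ Finset.Icc (m + 1) n, c α T j * Real.exp (-κ * (T j - t))

/-- `Ĝ¹_m(t) = exp(-∫₀ᵗ α) - c_n - c_m (T_m-t) K - ΔK ∑_{j=m+1}^n c_j`. -/
noncomputable def Ghat1 (α : ℝ → ℝ) (T : ℕ → ℝ) (n : ℕ) (Δ K : ℝ) (m : ℕ) (t : ℝ) : ℝ :=
  ed α t - c α T n - c α T m * ((T m - t) * K)
    - Δ * K * ∑ j ∈ Finset.Icc (m + 1) n, c α T j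

/-- `G²_m(t) = θ(Ĝ¹_m(t) − G¹_m(t)) + Ĝ¹_m(t)`. -/
noncomputable def G2 (α : ℝ → ℝ) (T : ℕ → ℝ) (n : ℕ) (κ θ Δ K : ℝ) (m : ℕ) (t : ℝ) : ℝ :=
  θ * (Ghat1 α T n Δ K m t - G1 α T n κ Δ K m t) + Ghat1 α T n Δ K m t

/-- `π_m(t) = (1/κ)[exp(−∫₀ᵗ α)(κ + α(t)) − c_m K e^{−κ(T_m−t)}]`. -/
noncomputable def piF (α : ℝ → ℝ) (T : ℕ → ℝ) (κ K : ℝ) (m : ℕ) (t : ℝ) : ℝ :=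
  (1 / κ) * (ed α t * (κ + α t) - c α T m * K * Real.exp (-κ * (T m - t)))

/-- `H¹_m(t) = −(κ + α(t)) exp(−∫₀ᵗ α) + c_m K e^{−κ(T_m−t)}`. -/
noncomputable def H1 (α : ℝ → ℝ) (T : ℕ → ℝ) (κ K : ℝ) (m : ℕ) (t : ℝ) : ℝ :=
  -(κ + α t) * ed α t + c α T m * K * Real.exp (-κ * (T m - t))

/-- `H²_m(t) = −θ H¹_m(t) + (1 + θ)(c_m K − α(t) e^{−∫₀ᵗ α})`. -/
noncomputable def H2 (α : ℝ → ℝ) (T : ℕ → ℝ) (κ θ K : ℝ) (m : ℕ) (t : ℝ) : ℝ :=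
  -θ * H1 α T κ K m t + (1 + θ) * (c α T m * K - α t * ed α t)

/-- If `K < α(T_n) + κ` then `lim_{t ↑ T_n} (−G²_n(t)/G¹_n(t))
= (θκ − α(T_n) + K)/(α(T_n) + κ − K)` and `−H²_n(T_n)/H¹_n(T_n)` equals the same
value: the zero curves of `G` and `H` have the same left limit at `T_n`. -/
theorem stmt_13 (n : ℕ) (hn : 1 ≤ n) (T : ℕ → ℝ) (Δ κ θ K : ℝ)
    (hT0 : 0 < T 0) (hΔ : 0 < Δ)
    (hten : ∀ i, 1 ≤ i → i ≤ n → T i - T (i - 1) = Δ)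
    (hκ : 0 < κ) (hθ : 0 < θ) (α : ℝ → ℝ) (hα : Continuous α)
    (hK : K < α (T n) + κ) :
    Filter.Tendsto (fun t => -G2 α T n κ θ Δ K n t / G1 α T n κ Δ K n t)
        (nhdsWithin (T n) (Set.Iio (T n)))
        (nhds ((θ * κ - α (T n) + K) / (α (T n) + κ - K))) ∧
      -H2 α T κ θ K n (T n) / H1 α T κ K n (T n)
        = (θ * κ - α (T n) + K) / (α (T n) + κ - K) := by
  have hc : (0:ℝ) < c α T n := Real.exp_pos _
  have hIcc : Finset.Icc (n + 1) n = ∅ := Finset.Icc_eq_empty (by omega)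
  have hden : (0:ℝ) < α (T n) + κ - K := by linarith
  have hD1ne : c α T n * (K - α (T n) - κ) ≠ 0 :=
    mul_ne_zero hc.ne' (by linarith)
  -- derivative of the integral
  have hF : HasDerivAt (fun t => ∫ s in (0:ℝ)..t, α s) (α (T n)) (T n) :=
    intervalIntegral.integral_hasDerivAt_right (hα.intervalIntegrable _ _)
      (hα.stronglyMeasurableAtFilter _ _) hα.continuousAt
  have hed : HasDerivAt (ed α) (-(α (T n)) * c α T n) (T n) := by
    have h := hF.neg.exp
    simp only [ed, c]
    convert h using 1
    simp [ed, mul_comm]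
    · rfl
    · simp [mul_comm]
  have hE : HasDerivAt (fun t => Real.exp (-κ * (T n - t))) κ (T n) := by
    have hi : HasDerivAt (fun t : ℝ => -κ * (T n - t)) κ (T n) := by
      have h0 : HasDerivAt (fun t : ℝ => T n - t) (-1) (T n) :=
        (hasDerivAt_id (T n)).const_sub (T n)
      have := h0.const_mul (-κ)
      simpa using this
    have := hi.exp
    simpa using this
  have hu : HasDerivAt (fun t => c α T n * ((T n - t) * K)) (c α T n * (-K)) (T n) := by
    have h0 : HasDerivAt (fun t : ℝ => T n - t) (-1) (T n) :=
      (hasDerivAt_id (T n)).const_sub (T n)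
    have := (h0.mul_const K).const_mul (c α T n)
    simpa using this
  have hG1 : HasDerivAt (fun t => G1 α T n κ Δ K n t)
      (c α T n * (K - α (T n) - κ)) (T n) := by
    simp only [G1, hIcc, Finset.sum_empty, mul_zero, sub_zero]
    have h2 := hE.const_mul (c α T n)
    have h3 := hu.mul hE
    convert (hed.sub h2).sub h3 using 1
    · rfl
    · rfl
    · rfl
    simp
    ring
  have hGh : HasDerivAt (fun t => Ghat1 α T n Δ K n t)
      (c α T n * (K - α (T n))) (T n) := by
    simp only [Ghat1, hIcc, Finset.sum_empty, mul_zero, sub_zero]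
    convert (hed.sub (hasDerivAt_const (T n) (c α T n))).sub hu using 1
    · rfl
    · rfl
    · rfl
    ring
  have hG2 : HasDerivAt (fun t => -G2 α T n κ θ Δ K n t)
      (-(θ * (c α T n * κ) + c α T n * (K - α (T n)))) (T n) := by
    have h := (((hGh.sub hG1).const_mul θ).add hGh).neg
    simp only [G2]
    convert h using 1
    · rfl
    · rfl
    · rfl
    ring
  have hG10 : G1 α T n κ Δ K n (T n) = 0 := by
    simp [G1, hIcc, c]
  have hG20 : G2 α T n κ θ Δ K n (T n) = 0 := by
    simp [G2, Ghat1, G1, hIcc, c]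
  have hmono : nhdsWithin (T n) (Set.Iio (T n)) ≤ nhdsWithin (T n) {T n}ᶜ :=
    nhdsWithin_mono _ fun x hx => ne_of_lt hx
  have l1 : Tendsto (slope (fun t => G1 α T n κ Δ K n t) (T n))
      (nhdsWithin (T n) (Set.Iio (T n))) (nhds (c α T n * (K - α (T n) - κ))) :=
    (hasDerivAt_iff_tendsto_slope.mp hG1).mono_left hmono
  have l2 : Tendsto (slope (fun t => -G2 α T n κ θ Δ K n t) (T n))
      (nhdsWithin (T n) (Set.Iio (T n)))
      (nhds (-(θ * (c α T n * κ) + c α T n * (K - α (T n))))) :=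
    (hasDerivAt_iff_tendsto_slope.mp hG2).mono_left hmono
  have ldiv := l2.div l1 hD1ne
  have hval : -(θ * (c α T n * κ) + c α T n * (K - α (T n))) /
      (c α T n * (K - α (T n) - κ)) = (θ * κ - α (T n) + K) / (α (T n) + κ - K) := by
    rw [div_eq_div_iff hD1ne hden.ne']
    ring
  constructor
  · rw [← hval]
    refine ldiv.congr' ?_
    filter_upwards [self_mem_nhdsWithin] with t ht
    have hne : t - T n ≠ 0 := sub_ne_zero.mpr (ne_of_lt ht)
    simp only [Pi.div_apply, slope_def_field, hG10, hG20, neg_zero, sub_zero]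
    rw [div_div_div_eq, mul_comm (-G2 α T n κ θ Δ K n t) (t - T n),
      mul_div_mul_left _ _ hne]
  · have hH1 : H1 α T κ K n (T n) = c α T n * (K - κ - α (T n)) := by
      simp only [H1]
      rw [show ed α (T n) = c α T n from rfl, sub_self, mul_zero, Real.exp_zero]
      ring
    have hH2 : H2 α T κ θ K n (T n) = c α T n * (θ * κ + K - α (T n)) := by
      simp only [H2, hH1]
      rw [show ed α (T n) = c α T n from rfl]
      ring
    rw [hH1, hH2, div_eq_div_iff (mul_ne_zero hc.ne' (by linarith)) hden.ne']
    ring
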